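/- (Antistalling bound) For the LP min{cᵀx : Ax = b, x ≥ 0} with A ∈ ℝ^{m×n} of full row rank, at any non-optimal basic feasible solution x there exists a sequence of simplex pivots (each with entering variable of negative reduced cost) containing at most n - m - 1 degenerate pivots before a non-degenerate pivot occurs. -/

import Mathlib

open Matrix Finset

/-- The `m × m` submatrix of `A` formed by the columns indexed by the basis `β`. -/
def subCols {m n : ℕ} (A : Matrix (Fin m) (Fin n) ℝ) (β : Fin m ↪ Fin n) :
    Matrix (Fin m) (Fin m) ℝ :=
  Matrix.of fun i k => A i (β k)

/-- The nonbasic index set `N = [n] \ B`. -/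
def nonbasic {m n : ℕ} (β : Fin m ↪ Fin n) : Finset (Fin n) :=
  Finset.univ \ Finset.univ.image ⇑β

/-- The entry `Ā_{i f} = (A_B⁻¹ A)_{i f}` (column `f` of `A_B⁻¹ A`). -/
noncomputable def Abar {m n : ℕ} (A : Matrix (Fin m) (Fin n) ℝ) (β : Fin m ↪ Fin n)
    (f : Fin n) (i : Fin m) : ℝ :=
  ((subCols A β)⁻¹.mulVec (fun r => A r f)) i

/-- The reduced cost `c̄_j = c_j - ((A_B⁻¹ A_N)ᵀ c_B)_j`. -/
noncomputable def redCost {m n : ℕ} (A : Matrix (Fin m) (Fin n) ℝ) (c : Fin n → ℝ)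
    (β : Fin m ↪ Fin n) (j : Fin n) : ℝ :=
  c j - ∑ i, Abar A β j i * c (β i)

/-- Feasibility for the LP `min cᵀx, Ax = b, x ≥ 0`. -/
def IsFeasible {m n : ℕ} (A : Matrix (Fin m) (Fin n) ℝ) (b : Fin m → ℝ)
    (x : Fin n → ℝ) : Prop :=
  A.mulVec x = b ∧ ∀ j, 0 ≤ x j

/-- `x` is the basic feasible solution associated with the basis `β`. -/
def IsBasicFeasible {m n : ℕ} (A : Matrix (Fin m) (Fin n) ℝ) (b : Fin m → ℝ)
    (x : Fin n → ℝ) (β : Fin m ↪ Fin n) : Prop :=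
  IsUnit (subCols A β) ∧ IsFeasible A b x ∧ ∀ j ∈ nonbasic β, x j = 0

/-- `x` is a basic feasible solution (for some basis). -/
def IsBFS {m n : ℕ} (A : Matrix (Fin m) (Fin n) ℝ) (b : Fin m → ℝ)
    (x : Fin n → ℝ) : Prop :=
  ∃ β : Fin m ↪ Fin n, IsBasicFeasible A b x β

/-- `β` is a feasible basis. -/
def IsFeasibleBasis {m n : ℕ} (A : Matrix (Fin m) (Fin n) ℝ) (b : Fin m → ℝ)
    (β : Fin m ↪ Fin n) : Prop :=
  IsUnit (subCols A β) ∧ ∃ x, IsFeasible A b x ∧ ∀ j ∈ nonbasic β, x j = 0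

namespace Stmt9Aux

variable {m n : ℕ} (A : Matrix (Fin m) (Fin n) ℝ) (c : Fin n → ℝ) (β : Fin m ↪ Fin n)

lemma mem_nonbasic {j : Fin n} : j ∈ nonbasic β ↔ ∀ i, β i ≠ j := by
  simp [nonbasic]

lemma sum_split (g : Fin n → ℝ) :
    ∑ j, g j = (∑ i, g (β i)) + ∑ j ∈ nonbasic β, g j := by
  rw [nonbasic, ← Finset.sum_sdiff (Finset.subset_univ (Finset.univ.image ⇑β)),
    Finset.sum_image (fun a _ b _ h => β.injective h)]
  ring

lemma Abar_basic (hB : IsUnit (subCols A β)) (i₀ : Fin m) :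
    Abar A β (β i₀) = fun i => if i = i₀ then 1 else 0 := by
  have hdet : IsUnit (subCols A β).det := (isUnit_iff_isUnit_det _).mp hB
  have h1 : (fun r => A r (β i₀)) = (subCols A β).mulVec (fun k => if k = i₀ then 1 else 0) := by
    funext r
    simp [Matrix.mulVec, dotProduct, subCols]
  funext i
  show ((subCols A β)⁻¹.mulVec (fun r => A r (β i₀))) i = _
  rw [h1, mulVec_mulVec, Matrix.nonsing_inv_mul _ hdet, one_mulVec]

lemma redCost_basic (hB : IsUnit (subCols A β)) (i₀ : Fin m) :
    redCost A c β (β i₀) = 0 := by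
  rw [redCost, Abar_basic A β hB]
  simp

lemma Abar_sum_zero {d : Fin n → ℝ} (hd : A.mulVec d = 0) (i : Fin m) :
    ∑ j, Abar A β j i * d j = 0 := by
  have : ∀ j, Abar A β j i = ∑ r, (subCols A β)⁻¹ i r * A r j := by
    intro j; rfl
  simp_rw [this, Finset.sum_mul, Finset.sum_comm (γ := Fin n), mul_assoc, ← Finset.mul_sum]
  have : ∀ r, ∑ j, A r j * d j = 0 := by
    intro r
    have := congrFun hd r
    simpa [Matrix.mulVec, dotProduct] using this
  simp [this]

lemma cost_id {d : Fin n → ℝ} (hd : A.mulVec d = 0) :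
    ∑ j, redCost A c β j * d j = ∑ j, c j * d j := by
  simp_rw [redCost, sub_mul, Finset.sum_sub_distrib, Finset.sum_mul]
  rw [Finset.sum_comm]
  have : ∀ i, ∑ j, Abar A β j i * c (β i) * d j = 0 := by
    intro i
    rw [show (fun j => Abar A β j i * c (β i) * d j) = fun j => (Abar A β j i * d j) * c (β i) by
      funext j; ring]
    rw [← Finset.sum_mul, Abar_sum_zero A β hd, zero_mul]
  simp [this]

end Stmt9Aux

namespace Stmt9Aux

/-- The edge direction for entering variable `f`. -/
noncomputable def edir {m n : ℕ} (A : Matrix (Fin m) (Fin n) ℝ) (β : Fin m ↪ Fin n)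
    (f : Fin n) : Fin n → ℝ :=
  fun j => if j = f then 1 else Function.extend β (fun i => -(Abar A β f i)) (fun _ => 0) j

variable {m n : ℕ} (A : Matrix (Fin m) (Fin n) ℝ) (c : Fin n → ℝ) (β : Fin m ↪ Fin n)
  {f : Fin n}

lemma edir_basic (hf : f ∈ nonbasic β) (i : Fin m) :
    edir A β f (β i) = -(Abar A β f i) := by
  have : β i ≠ f := (mem_nonbasic β).mp hf i
  rw [edir, if_neg this, β.injective.extend_apply]

lemma edir_self (hf : f ∈ nonbasic β) : edir A β f f = 1 := by
  rw [edir, if_pos rfl]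

lemma edir_other (hf : f ∈ nonbasic β) {j : Fin n} (hj : j ∈ nonbasic β) (hjf : j ≠ f) :
    edir A β f j = 0 := by
  rw [edir, if_neg hjf, Function.extend_apply']
  rintro ⟨i, rfl⟩
  exact (mem_nonbasic β).mp hj i rfl

lemma sum_edir (hf : f ∈ nonbasic β) (u : Fin n → ℝ) :
    ∑ j, u j * edir A β f j = u f - ∑ i, Abar A β f i * u (β i) := by
  rw [sum_split β]
  have h1 : ∑ i, u (β i) * edir A β f (β i) = -∑ i, Abar A β f i * u (β i) := by
    rw [← Finset.sum_neg_distrib]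
    refine Finset.sum_congr rfl fun i _ => ?_
    rw [edir_basic A β hf]; ring
  have h2 : ∑ j ∈ nonbasic β, u j * edir A β f j = u f := by
    rw [Finset.sum_eq_single f]
    · rw [edir_self A β hf, mul_one]
    · intro j hj hjf; rw [edir_other A β hf hj hjf, mul_zero]
    · intro h; exact absurd hf h
  rw [h1, h2]; ring

lemma mulVec_edir (hB : IsUnit (subCols A β)) (hf : f ∈ nonbasic β) :
    A.mulVec (edir A β f) = 0 := by
  have hdet : IsUnit (subCols A β).det := (isUnit_iff_isUnit_det _).mp hB
  funext r
  have : (A.mulVec (edir A β f)) r = ∑ j, A r j * edir A β f j := rfl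
  rw [this, sum_edir A β hf]
  have : ∑ i, Abar A β f i * A r (β i)
      = ((subCols A β).mulVec ((subCols A β)⁻¹.mulVec (fun s => A s f))) r := by
    simp only [Matrix.mulVec, dotProduct]
    exact Finset.sum_congr rfl fun i _ => by rw [Abar, mul_comm]; rfl
  rw [this, mulVec_mulVec, Matrix.mul_nonsing_inv _ hdet, one_mulVec]
  simp

lemma sum_c_edir (hf : f ∈ nonbasic β) :
    ∑ j, c j * edir A β f j = redCost A c β f := by
  rw [sum_edir A β hf]; rfl

end Stmt9Aux

namespace Stmt9Aux

variable {m n : ℕ}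

/-- The basis obtained by replacing `β i` with `f`. -/
def pivotEmb (β : Fin m ↪ Fin n) (i : Fin m) (f : Fin n) (hf : f ∈ nonbasic β) :
    Fin m ↪ Fin n :=
  ⟨fun k => if k = i then f else β k, by
    intro k₁ k₂ h
    by_cases h1 : k₁ = i <;> by_cases h2 : k₂ = i <;> simp [h1, h2] at h ⊢
    · exact absurd ((mem_nonbasic β).mp hf k₂) (by simp [h.symm])
    · exact absurd ((mem_nonbasic β).mp hf k₁) (by simp [h])
    · exact h⟩

variable (A : Matrix (Fin m) (Fin n) ℝ) (β : Fin m ↪ Fin n) {f : Fin n} (i : Fin m)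
  (hf : f ∈ nonbasic β)

lemma pivotEmb_apply_self : pivotEmb β i f hf i = f := by simp [pivotEmb]; exact if_pos rfl

lemma pivotEmb_apply_ne {k : Fin m} (hk : k ≠ i) : pivotEmb β i f hf k = β k := by
  simp [pivotEmb, hk]; exact if_neg hk

lemma subCols_pivot (hB : IsUnit (subCols A β)) :
    subCols A (pivotEmb β i f hf)
      = subCols A β * ((1 : Matrix (Fin m) (Fin m) ℝ).updateCol i (Abar A β f)) := by
  have hdet : IsUnit (subCols A β).det := (isUnit_iff_isUnit_det _).mp hB
  funext r s
  rw [Matrix.mul_apply]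
  by_cases hs : s = i
  · subst hs
    have : ∑ k, subCols A β r k * (1 : Matrix (Fin m) (Fin m) ℝ).updateCol s (Abar A β f) k s
        = ((subCols A β).mulVec ((subCols A β)⁻¹.mulVec (fun t => A t f))) r := by
      simp only [Matrix.mulVec, dotProduct, Matrix.updateCol_apply, if_pos rfl]
      rfl
    rw [this, mulVec_mulVec, Matrix.mul_nonsing_inv _ hdet, one_mulVec]
    simp [subCols, pivotEmb]; exact congrArg (A r) (if_pos rfl)
  · simp only [Matrix.updateCol_apply, if_neg hs, Matrix.one_apply]
    rw [Finset.sum_eq_single s]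
    · simp [subCols, pivotEmb_apply_ne, hs]
    · intro k _ hk; simp [hk]
    · simp
  done

lemma isUnit_subCols_pivot (hB : IsUnit (subCols A β)) (ha : Abar A β f i ≠ 0) :
    IsUnit (subCols A (pivotEmb β i f hf)) := by
  rw [isUnit_iff_isUnit_det, subCols_pivot A β i hf hB, Matrix.det_mul]
  have : ((1 : Matrix (Fin m) (Fin m) ℝ).updateCol i (Abar A β f)).det = Abar A β f i := by
    rw [← cramer_apply, cramer_one]; rfl
  rw [this]
  exact ((isUnit_iff_isUnit_det _).mp hB).mul (Ne.isUnit ha)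

lemma image_pivot :
    Finset.univ.image ⇑(pivotEmb β i f hf)
      = insert f ((Finset.univ.image ⇑β).erase (β i)) := by
  ext j
  simp only [Finset.mem_image, Finset.mem_insert, Finset.mem_erase, Finset.mem_univ,
    true_and]
  constructor
  · rintro ⟨k, rfl⟩
    by_cases hk : k = i
    · subst hk; left; exact pivotEmb_apply_self β k hf
    · right
      rw [pivotEmb_apply_ne β i hf hk]
      exact ⟨fun h => hk (β.injective h), ⟨k, rfl⟩⟩
  · rintro (rfl | ⟨hne, k, rfl⟩)
    · exact ⟨i, pivotEmb_apply_self β i hf⟩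
    · refine ⟨k, pivotEmb_apply_ne β i hf fun h => hne ?_⟩
      rw [h]

end Stmt9Aux

namespace Stmt9Aux

variable {m n : ℕ} {A : Matrix (Fin m) (Fin n) ℝ} {b : Fin m → ℝ} {c : Fin n → ℝ}
  {β : Fin m ↪ Fin n} {x : Fin n → ℝ} {f : Fin n}

lemma exists_pos_Abar (hbdd : ∃ L : ℝ, ∀ x', IsFeasible A b x' → L ≤ ∑ j, c j * x' j)
    (hx : IsBasicFeasible A b x β) (hf : f ∈ nonbasic β)
    (hred : redCost A c β f < 0) : ∃ i, 0 < Abar A β f i := by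
  by_contra hcon
  push_neg at hcon
  obtain ⟨L, hL⟩ := hbdd
  obtain ⟨hB, ⟨hAx, hx0⟩, hnb⟩ := hx
  set w := edir A β f with hw
  set S := ∑ j, c j * x j with hS
  set r := redCost A c β f with hr
  set θ : ℝ := max 0 ((S - L) / (-r) + 1) with hθdef
  have hθ0 : 0 ≤ θ := le_max_left _ _
  have hfeas : IsFeasible A b (x + θ • w) := by
    constructor
    · rw [Matrix.mulVec_add, Matrix.mulVec_smul, mulVec_edir A β hB hf, hAx]
      simp
    · intro j
      by_cases hjf : j = f
      · subst hjf
        have : x j = 0 := hnb j hf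
        simp [this, edir_self A β hf, hθ0, w]
      · by_cases hjb : ∃ i, β i = j
        · obtain ⟨i, rfl⟩ := hjb
          have : w (β i) = -(Abar A β f i) := edir_basic A β hf i
          have h1 : 0 ≤ θ * w (β i) := by
            rw [this]
            have := hcon i
            nlinarith
          have := hx0 (β i)
          simp only [Pi.add_apply, Pi.smul_apply, smul_eq_mul]
          linarith
        · have hjn : j ∈ nonbasic β := (mem_nonbasic β).mpr fun i hi => hjb ⟨i, hi⟩
          have : w j = 0 := edir_other A β hf hjn hjf
          simp only [Pi.add_apply, Pi.smul_apply, smul_eq_mul, this, mul_zero, add_zero]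
          exact hx0 j
  have hcost : ∑ j, c j * (x + θ • w) j = S + θ * r := by
    simp only [Pi.add_apply, Pi.smul_apply, smul_eq_mul, mul_add]
    rw [Finset.sum_add_distrib]
    congr 1
    rw [show ∑ j, c j * (θ * w j) = θ * ∑ j, c j * w j by rw [Finset.mul_sum]; congr 1; funext j; ring]
    rw [sum_c_edir A c β hf]
  have hLe := hL _ hfeas
  rw [hcost] at hLe
  have hθge : (S - L) / (-r) + 1 ≤ θ := le_max_right _ _
  have hrpos : 0 < -r := by linarith
  have hdiv : (S - L) / (-r) * (-r) = S - L := div_mul_cancel₀ _ (ne_of_gt hrpos)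
  nlinarith

end Stmt9Aux

namespace Stmt9Aux

variable {m n : ℕ}

def degStep (A : Matrix (Fin m) (Fin n) ℝ) (c : Fin n → ℝ) (x : Fin n → ℝ)
    (β β' : Fin m ↪ Fin n) : Prop :=
  ∃ f ∈ nonbasic β, ∃ i : Fin m,
    redCost A c β f < 0 ∧ x (β i) = 0 ∧ 0 < Abar A β f i ∧
    Finset.univ.image ⇑β' = insert f ((Finset.univ.image ⇑β).erase (β i))

def finalStep (A : Matrix (Fin m) (Fin n) ℝ) (c : Fin n → ℝ) (x : Fin n → ℝ)
    (β : Fin m ↪ Fin n) : Prop :=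
  ∃ f ∈ nonbasic β, redCost A c β f < 0 ∧ (∃ i, 0 < Abar A β f i) ∧
    ∀ i, 0 < Abar A β f i → 0 < x (β i)

def Good (A : Matrix (Fin m) (Fin n) ℝ) (b : Fin m → ℝ) (c : Fin n → ℝ) (x : Fin n → ℝ)
    (β0 : Fin m ↪ Fin n) (k : ℕ) : Prop :=
  ∃ βs : Fin (k + 1) → Fin m ↪ Fin n,
    βs 0 = β0 ∧ (∀ t, IsBasicFeasible A b x (βs t)) ∧
    (∀ t : Fin k, degStep A c x (βs t.castSucc) (βs t.succ)) ∧
    finalStep A c x (βs (Fin.last k))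

variable {A : Matrix (Fin m) (Fin n) ℝ} {b : Fin m → ℝ} {c : Fin n → ℝ} {x : Fin n → ℝ}

lemma good_cons {β β' : Fin m ↪ Fin n} {k : ℕ} (h' : Good A b c x β' k)
    (hx : IsBasicFeasible A b x β) (hstep : degStep A c x β β') :
    Good A b c x β (k + 1) := by
  obtain ⟨βs, h0, h1, h2, h3⟩ := h'
  refine ⟨Fin.cons β βs, by simp, ?_, ?_, ?_⟩
  · intro t
    induction t using Fin.cases with
    | zero => simpa using hx
    | succ j => simpa using h1 j
  · intro t
    induction t using Fin.cases with
    | zero =>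
      have e1 : (Fin.cons β βs : Fin (k+2) → Fin m ↪ Fin n) (Fin.castSucc 0) = β := by simp
      have e2 : (Fin.cons β βs : Fin (k+2) → Fin m ↪ Fin n) (Fin.succ 0) = β' := by
        rw [Fin.cons_succ, h0]
      rw [e1, e2]
      exact hstep
    | succ j =>
      have e1 : (Fin.cons β βs : Fin (k+2) → Fin m ↪ Fin n) (Fin.castSucc j.succ)
          = βs j.castSucc := by
        rw [← Fin.succ_castSucc, Fin.cons_succ]
      have e2 : (Fin.cons β βs : Fin (k+2) → Fin m ↪ Fin n) (Fin.succ j.succ) = βs j.succ := by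
        rw [Fin.cons_succ]
      rw [e1, e2]
      exact h2 j
  · have e : (Fin.cons β βs : Fin (k+2) → Fin m ↪ Fin n) (Fin.last (k+1)) = βs (Fin.last k) := by
      rw [← Fin.succ_last, Fin.cons_succ]
    rw [e]
    exact h3

lemma exists_entering {β : Fin m ↪ Fin n} {d : Fin n → ℝ}
    (hx : IsBasicFeasible A b x β) (hd : A.mulVec d = 0) (hc : ∑ j, c j * d j < 0)
    (hpos : ∀ j, x j = 0 → 0 ≤ d j) :
    ∃ f ∈ nonbasic β, redCost A c β f < 0 ∧ 0 < d f := by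
  have h1 : ∑ j, redCost A c β j * d j < 0 := by rw [cost_id A c β hd]; exact hc
  have h2 : ∃ f, redCost A c β f * d f < 0 := by
    by_contra h
    push_neg at h
    exact absurd (Finset.sum_nonneg fun j _ => h j) (not_le.mpr h1)
  obtain ⟨f, hf⟩ := h2
  have hfnb : f ∈ nonbasic β := by
    rw [mem_nonbasic]
    intro i hi
    rw [← hi, redCost_basic A c β hx.1 i] at hf
    simp at hf
  have hxz : x f = 0 := hx.2.2 f hfnb
  have hdf : 0 < d f := (hpos f hxz).lt_of_ne fun h => by rw [← h] at hf; simp at hf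
  exact ⟨f, hfnb, by nlinarith, hdf⟩

lemma sum_mul_add_smul (u d w : Fin n → ℝ) (t : ℝ) :
    ∑ j, u j * (d j + t * w j) = (∑ j, u j * d j) + t * ∑ j, u j * w j := by
  rw [Finset.mul_sum, ← Finset.sum_add_distrib]
  exact Finset.sum_congr rfl fun j _ => by ring

lemma key (hbdd : ∃ L : ℝ, ∀ x', IsFeasible A b x' → L ≤ ∑ j, c j * x' j) :
    ∀ (N : ℕ) (β : Fin m ↪ Fin n) (d : Fin n → ℝ),
      IsBasicFeasible A b x β → A.mulVec d = 0 → (∑ j, c j * d j) < 0 →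
      (∀ j, x j = 0 → 0 ≤ d j) →
      ((nonbasic β).filter fun j => 0 < d j).card ≤ N →
      ∃ k, k + 1 ≤ N ∧ Good A b c x β k := by
  intro N
  induction N with
  | zero =>
    intro β d hx hd hc hpos hcard
    obtain ⟨f, hfnb, _, hfd⟩ := exists_entering hx hd hc hpos
    have : f ∈ (nonbasic β).filter fun j => 0 < d j := Finset.mem_filter.mpr ⟨hfnb, hfd⟩
    have := Finset.card_pos.mpr ⟨f, this⟩
    omega
  | succ N IH =>
    intro β d hx hd hc hpos hcard
    obtain ⟨f, hfnb, hfred, hfd⟩ := exists_entering hx hd hc hpos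
    by_cases hBl : (Finset.univ.filter fun i : Fin m => 0 < Abar A β f i ∧ x (β i) = 0).Nonempty
    · -- degenerate pivot possible: pivot and recurse
      obtain ⟨i0, hi0mem, hi0min⟩ := Finset.exists_min_image _
        (fun i => d (β i) / Abar A β f i) hBl
      obtain ⟨ha, hx0⟩ := (Finset.mem_filter.mp hi0mem).2
      set a := Abar A β f i0 with ha_def
      set ts : ℝ := d (β i0) / a with hts_def
      have hts0 : 0 ≤ ts := div_nonneg (hpos _ hx0) ha.le
      set d' : Fin n → ℝ := d + ts • edir A β f with hd'_def
      have hd'app : ∀ j, d' j = d j + ts * edir A β f j := fun j => rfl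
      set β' := pivotEmb β i0 f hfnb with hβ'_def
      have hd' : A.mulVec d' = 0 := by
        rw [hd'_def, Matrix.mulVec_add, Matrix.mulVec_smul, hd, mulVec_edir A β hx.1 hfnb]
        simp
      have hc' : ∑ j, c j * d' j < 0 := by
        have : ∑ j, c j * d' j = (∑ j, c j * d j) + ts * redCost A c β f := by
          simp only [hd'app]
          rw [sum_mul_add_smul, sum_c_edir A c β hfnb]
        rw [this]
        nlinarith
      have hpos' : ∀ j, x j = 0 → 0 ≤ d' j := by
        intro j hj
        rw [hd'app]
        by_cases hjf : j = f
        · subst hjf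
          rw [edir_self A β hfnb]
          have := hpos j hj
          linarith
        · by_cases hjb : ∃ i, β i = j
          · obtain ⟨i, rfl⟩ := hjb
            rw [edir_basic A β hfnb]
            rcases le_or_gt (Abar A β f i) 0 with hle | hlt
            · have := hpos _ hj
              nlinarith
            · have himem : i ∈ Finset.univ.filter
                  fun i : Fin m => 0 < Abar A β f i ∧ x (β i) = 0 :=
                Finset.mem_filter.mpr ⟨Finset.mem_univ _, hlt, hj⟩
              have := hi0min i himem
              have h2 : ts * Abar A β f i ≤ d (β i) := by
                rw [← le_div_iff₀ hlt]
                exact this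
              linarith
          · have hjn : j ∈ nonbasic β := (mem_nonbasic β).mpr fun i hi => hjb ⟨i, hi⟩
            rw [edir_other A β hfnb hjn hjf, mul_zero, add_zero]
            exact hpos j hj
      have hx' : IsBasicFeasible A b x β' := by
        refine ⟨isUnit_subCols_pivot A β i0 hfnb hx.1 (ne_of_gt ha), hx.2.1, ?_⟩
        intro j hj
        by_cases hji : j = β i0
        · rw [hji]; exact hx0
        · refine hx.2.2 j ((mem_nonbasic β).mpr fun k hk => ?_)
          by_cases hki : k = i0
          · exact hji (hki ▸ hk ▸ rfl)
          · exact (mem_nonbasic β').mp hj k (by rw [hβ'_def, pivotEmb_apply_ne β i0 hfnb hki]; exact hk)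
      have hsub : ((nonbasic β').filter fun j => 0 < d' j)
          ⊆ ((nonbasic β).filter fun j => 0 < d j).erase f := by
        intro j hjmem
        obtain ⟨hjnb', hjd'⟩ := Finset.mem_filter.mp hjmem
        have hjf : j ≠ f := by
          rintro rfl
          exact (mem_nonbasic β').mp hjnb' i0 (pivotEmb_apply_self β i0 hfnb)
        have hji0 : j ≠ β i0 := by
          rintro rfl
          rw [hd'app, edir_basic A β hfnb] at hjd'
          have hcanc : ts * Abar A β f i0 = d (β i0) := by
            rw [hts_def, ← ha_def]
            field_simp
          nlinarith [hjd', hcanc]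
        have hjnb : j ∈ nonbasic β := by
          refine (mem_nonbasic β).mpr fun k hk => ?_
          by_cases hki : k = i0
          · exact hji0 (hki ▸ hk).symm
          · exact (mem_nonbasic β').mp hjnb' k
              (by rw [hβ'_def, pivotEmb_apply_ne β i0 hfnb hki]; exact hk)
        have hdj : d' j = d j := by
          rw [hd'app, edir_other A β hfnb hjnb hjf, mul_zero, add_zero]
        exact Finset.mem_erase.mpr ⟨hjf, Finset.mem_filter.mpr ⟨hjnb, hdj ▸ hjd'⟩⟩
      have hfF : f ∈ (nonbasic β).filter fun j => 0 < d j := Finset.mem_filter.mpr ⟨hfnb, hfd⟩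
      have hcard' : ((nonbasic β').filter fun j => 0 < d' j).card ≤ N := by
        have h1 := Finset.card_le_card hsub
        have h2 := Finset.card_erase_of_mem hfF
        have h3 := Finset.card_pos.mpr ⟨f, hfF⟩
        omega
      obtain ⟨k, hk, hgood⟩ := IH β' d' hx' hd' hc' hpos' hcard'
      refine ⟨k + 1, by omega, good_cons hgood hx ⟨f, hfnb, i0, hfred, hx0, ha, ?_⟩⟩
      exact image_pivot β i0 hfnb
    · -- non-degenerate pivot available: terminal case
      have hex : ∃ i, 0 < Abar A β f i := exists_pos_Abar hbdd hx hfnb hfred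
      have hall : ∀ i, 0 < Abar A β f i → 0 < x (β i) := by
        intro i hi
        rcases (hx.2.1.2 (β i)).lt_or_eq with h | h
        · exact h
        · exact absurd ⟨i, Finset.mem_filter.mpr ⟨Finset.mem_univ _, hi, h.symm⟩⟩ hBl
      exact ⟨0, by omega, fun _ => β, rfl, fun _ => hx, fun t => t.elim0,
        f, hfnb, hfred, hex, hall⟩

end Stmt9Aux

/-- Antistalling bound: at any non-optimal BFS there is a sequence of
simplex pivots (entering variable with negative reduced cost) with at most
`n - m - 1` degenerate pivots before a non-degenerate pivot occurs. -/
theorem stmt9 (m n : ℕ) (A : Matrix (Fin m) (Fin n) ℝ) (b : Fin m → ℝ) (c : Fin n → ℝ)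
    (hrank : A.rank = m)
    (hbdd : ∃ L : ℝ, ∀ x', IsFeasible A b x' → L ≤ ∑ j, c j * x' j)
    (x : Fin n → ℝ) (β0 : Fin m ↪ Fin n) (hx : IsBasicFeasible A b x β0)
    (hnonopt : ∃ x', IsFeasible A b x' ∧ ∑ j, c j * x' j < ∑ j, c j * x j) :
    ∃ k : ℕ, k ≤ n - m - 1 ∧
      ∃ βs : Fin (k + 1) → Fin m ↪ Fin n,
        βs 0 = β0 ∧
        (∀ t, IsBasicFeasible A b x (βs t)) ∧
        -- each step is a degenerate simplex pivot with entering variable of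
        -- negative reduced cost (min ratio 0)
        (∀ t : Fin k, ∃ f ∈ nonbasic (βs t.castSucc), ∃ i : Fin m,
          redCost A c (βs t.castSucc) f < 0 ∧
          x (βs t.castSucc i) = 0 ∧ 0 < Abar A (βs t.castSucc) f i ∧
          Finset.univ.image ⇑(βs t.succ)
            = insert f ((Finset.univ.image ⇑(βs t.castSucc)).erase (βs t.castSucc i))) ∧
        -- at the last basis a non-degenerate pivot occurs: some entering variable
        -- with negative reduced cost has strictly positive minimum ratio
        (∃ f ∈ nonbasic (βs (Fin.last k)),
          redCost A c (βs (Fin.last k)) f < 0 ∧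
          (∃ i, 0 < Abar A (βs (Fin.last k)) f i) ∧
          ∀ i, 0 < Abar A (βs (Fin.last k)) f i → 0 < x (βs (Fin.last k) i)) := by
  classical
  obtain ⟨x', hx'f, hx'c⟩ := hnonopt
  set d : Fin n → ℝ := x' - x with hd_def
  have hd : A.mulVec d = 0 := by
    rw [hd_def, Matrix.mulVec_sub, hx.2.1.1, hx'f.1, sub_self]
  have hc : ∑ j, c j * d j < 0 := by
    have h : ∑ j, c j * d j = (∑ j, c j * x' j) - ∑ j, c j * x j := by
      rw [← Finset.sum_sub_distrib]
      exact Finset.sum_congr rfl fun j _ => by rw [hd_def]; simp [mul_sub]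
    rw [h]
    linarith
  have hpos : ∀ j, x j = 0 → 0 ≤ d j := by
    intro j hj
    rw [hd_def]
    simpa [hj] using hx'f.2 j
  have hcard : ((nonbasic β0).filter fun j => 0 < d j).card ≤ n - m := by
    have h1 : ((nonbasic β0).filter fun j => 0 < d j).card ≤ (nonbasic β0).card :=
      Finset.card_filter_le _ _
    have h2 : (nonbasic β0).card = n - m := by
      rw [nonbasic, Finset.card_sdiff_of_subset (Finset.subset_univ _),
        Finset.card_image_of_injective _ β0.injective]
      simp
    omega
  obtain ⟨k, hk, βs, h0, h1, h2, h3⟩ := Stmt9Aux.key hbdd (n - m) β0 d hx hd hc hpos hcard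
  exact ⟨k, by omega, βs, h0, h1, h2, h3⟩
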